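/- If P, Q, R are the vertices of a triangle in the pants graph of S, then the three corresponding pants decompositions share a common set of n-1 curves, where n is the number of curves in a pants decomposition; i.e., P, Q, R are of the form {α₁, α₂, ..., αₙ}, {α₁', α₂, ..., αₙ}, {α₁'', α₂, ..., αₙ}. -/
import Mathlib


open scoped Classical

/-- An abstract model of the pants graph data of a surface `S`: the isotopy
classes of essential non-peripheral simple closed curves with geometric
intersection number, the number `n = 3g - 3 + r` of curves in a pants
decomposition, and the predicate of being a pants decomposition. -/
structure PantsGraphModel where
  Curve : Type
  inter : Curve → Curve → ℕ
  inter_symm : ∀ a b, inter a b = inter b a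
  n : ℕ
  IsPants : Finset Curve → Prop
  pants_card : ∀ P, IsPants P → P.card = n
  pants_disjoint : ∀ P, IsPants P → ∀ a ∈ P, ∀ b ∈ P, a ≠ b → inter a b = 0

/-- An elementary move between two pants decompositions: they share `n - 1`
curves and the two exchanged curves intersect (minimally). This is the edge
relation of the pants graph. -/
def ElemMove (M : PantsGraphModel) (P Q : Finset M.Curve) : Prop :=
  M.IsPants P ∧ M.IsPants Q ∧ P ≠ Q ∧ (P ∩ Q).card = M.n - 1 ∧
    ∀ a ∈ P \ Q, ∀ b ∈ Q \ P, 0 < M.inter a b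

/-- if `P`, `Q`, `R` are the vertices of a triangle in the pants
graph, then the three pants decompositions share a common set of `n - 1`
curves, i.e. they are of the form `{α₁, α₂, …, αₙ}`, `{α₁', α₂, …, αₙ}`,
`{α₁'', α₂, …, αₙ}`. -/
theorem pants_triangle_common_curves (M : PantsGraphModel)
    (P Q R : Finset M.Curve)
    (hPQ : ElemMove M P Q) (hQR : ElemMove M Q R) (hPR : ElemMove M P R) :
    (P ∩ Q ∩ R).card = M.n - 1 := by

  obtain ⟨hP, hQ, hPQne, hPQcard, hPQint⟩ := hPQ
  obtain ⟨-, hR, -, hQRcard, hQRint⟩ := hQR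
  obtain ⟨-, -, -, hPRcard, hPRint⟩ := hPR
  have hPc := M.pants_card P hP
  have hQc := M.pants_card Q hQ
  have hn : 1 ≤ M.n := by
    rcases Nat.eq_zero_or_pos M.n with h | h
    · exfalso
      apply hPQne
      have : P = ∅ := Finset.card_eq_zero.mp (by omega)
      have : Q = ∅ := Finset.card_eq_zero.mp (by omega)
      simp_all
    · exact h
  have cPQ : (P \ Q).card = 1 := by
    have := Finset.card_sdiff_add_card_inter P Q
    omega
  have cQP : (Q \ P).card = 1 := by
    have := Finset.card_sdiff_add_card_inter Q P
    rw [Finset.inter_comm] at this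
    omega
  have cPR : (P \ R).card = 1 := by
    have := Finset.card_sdiff_add_card_inter P R
    omega
  have cQR : (Q \ R).card = 1 := by
    have := Finset.card_sdiff_add_card_inter Q R
    omega
  have hsub : P ∩ Q ⊆ R := by
    intro c hc
    by_contra hcR
    have hcP : c ∈ P := (Finset.mem_inter.mp hc).1
    have hcQ : c ∈ Q := (Finset.mem_inter.mp hc).2
    have hPR1 : P \ R = {c} :=
      Finset.eq_singleton_iff_unique_mem.mpr ⟨Finset.mem_sdiff.mpr ⟨hcP, hcR⟩, by
        intro x hx
        have := Finset.card_le_one.mp (le_of_eq cPR) x hx c (Finset.mem_sdiff.mpr ⟨hcP, hcR⟩)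
        exact this⟩
    have hQR1 : Q \ R = {c} :=
      Finset.eq_singleton_iff_unique_mem.mpr ⟨Finset.mem_sdiff.mpr ⟨hcQ, hcR⟩, by
        intro x hx
        exact Finset.card_le_one.mp (le_of_eq cQR) x hx c (Finset.mem_sdiff.mpr ⟨hcQ, hcR⟩)⟩
    obtain ⟨a, ha⟩ := Finset.card_eq_one.mp cPQ
    obtain ⟨b, hb⟩ := Finset.card_eq_one.mp cQP
    have haPQ : a ∈ P \ Q := ha ▸ Finset.mem_singleton_self a
    have hbQP : b ∈ Q \ P := hb ▸ Finset.mem_singleton_self b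
    have haP := (Finset.mem_sdiff.mp haPQ).1
    have haQ := (Finset.mem_sdiff.mp haPQ).2
    have hbQ := (Finset.mem_sdiff.mp hbQP).1
    have hbP := (Finset.mem_sdiff.mp hbQP).2
    have haR : a ∈ R := by
      by_contra haR
      have : a ∈ P \ R := Finset.mem_sdiff.mpr ⟨haP, haR⟩
      rw [hPR1, Finset.mem_singleton] at this
      exact haQ (this ▸ hcQ)
    have hbR : b ∈ R := by
      by_contra hbR
      have : b ∈ Q \ R := Finset.mem_sdiff.mpr ⟨hbQ, hbR⟩
      rw [hQR1, Finset.mem_singleton] at this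
      exact hbP (this ▸ hcP)
    have hab : a ≠ b := fun h => haQ (h ▸ hbQ)
    have h0 := M.pants_disjoint R hR a haR b hbR hab
    have h1 := hPQint a haPQ b hbQP
    omega
  have : P ∩ Q ∩ R = P ∩ Q := Finset.inter_eq_left.mpr hsub
  rw [this, hPQcard]
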